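/- For every integer n ≥ 1, the set D_n has exactly (n+1)(n+2)/2 elements. -/

import Mathlib

open Pointwise

/-- The submonoid `σ_Z ⊂ ℤ²` of pairs `(a,b)` with `0 ≤ b` and `3b ≤ 4a`. -/
def sigmaZ : Set (ℤ × ℤ) := {a : ℤ × ℤ | 0 ≤ a.2 ∧ 3 * a.2 ≤ 4 * a.1}

/-- The point `p_n`. -/
def pPt (n : ℤ) : ℤ × ℤ := if Odd n then ((n + 3) / 2, 0) else (n / 2 + 1, 0)

/-- The point `s_n`. -/
def sPt (n : ℤ) : ℤ × ℤ :=
  if Odd n then (3 * (n + 1) / 2, 2 * (n + 1)) else (3 * (n + 2) / 2, 2 * (n + 2))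

/-- The point `q^i = (n+1-i, n-2i)`. -/
def qPt (n i : ℤ) : ℤ × ℤ := (n + 1 - i, n - 2 * i)

/-- The point `r^j = (n+1+j, n+1+2j)`. -/
def rPt (n j : ℤ) : ℤ × ℤ := (n + 1 + j, n + 1 + 2 * j)

/-- The set `P_n ⊂ ℤ²`. -/
def Pset (n : ℤ) : Set (ℤ × ℤ) :=
  {pPt n, sPt n}
    ∪ {x | ∃ i : ℤ, 0 ≤ i ∧ i ≤ (if Odd n then (n - 1) / 2 else (n - 2) / 2) ∧ x = qPt n i}
    ∪ {x | ∃ j : ℤ, 0 ≤ j ∧ j ≤ (if Odd n then (n - 1) / 2 else n / 2) ∧ x = rPt n j}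

/-- The set `D_n = σ_Z \ (P_n + σ_Z)`, where `+` is pointwise addition of sets. -/
def Dset (n : ℤ) : Set (ℤ × ℤ) := sigmaZ \ (Pset n + sigmaZ)

/- ## Auxiliary material -/

lemma pPt_mem (n : ℤ) : pPt n ∈ Pset n := Or.inl (Or.inl (Set.mem_insert _ _))

lemma sPt_mem (n : ℤ) : sPt n ∈ Pset n := Or.inl (Or.inl (Set.mem_insert_of_mem _ rfl))

lemma qPt_mem {n i : ℤ} (h0 : 0 ≤ i)
    (h1 : i ≤ if Odd n then (n - 1) / 2 else (n - 2) / 2) : qPt n i ∈ Pset n :=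
  Or.inl (Or.inr ⟨i, h0, h1, rfl⟩)

lemma rPt_mem {n j : ℤ} (h0 : 0 ≤ j)
    (h1 : j ≤ if Odd n then (n - 1) / 2 else n / 2) : rPt n j ∈ Pset n :=
  Or.inr ⟨j, h0, h1, rfl⟩

lemma mem_PS {n : ℤ} {x p : ℤ × ℤ} (hp : p ∈ Pset n) (h1 : p.2 ≤ x.2)
    (h2 : 3 * (x.2 - p.2) ≤ 4 * (x.1 - p.1)) : x ∈ Pset n + sigmaZ := by
  have hs : x - p ∈ sigmaZ := by
    constructor
    · show (0:ℤ) ≤ (x - p).2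
      rw [Prod.snd_sub]; omega
    · show 3 * (x - p).2 ≤ 4 * (x - p).1
      rw [Prod.snd_sub, Prod.fst_sub]; omega
  have h := Set.add_mem_add hp hs
  rwa [show p + (x - p) = x by ring] at h

lemma pPt_odd {n : ℤ} (h : n % 2 = 1) : pPt n = ((n + 3) / 2, 0) := by
  rw [pPt, if_pos (Int.odd_iff.mpr h)]

lemma pPt_even {n : ℤ} (h : n % 2 = 0) : pPt n = (n / 2 + 1, 0) := by
  rw [pPt, if_neg (by simp [Int.odd_iff, h])]

lemma sPt_odd {n : ℤ} (h : n % 2 = 1) : sPt n = (3 * (n + 1) / 2, 2 * (n + 1)) := by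
  rw [sPt, if_pos (Int.odd_iff.mpr h)]

lemma sPt_even {n : ℤ} (h : n % 2 = 0) : sPt n = (3 * (n + 2) / 2, 2 * (n + 2)) := by
  rw [sPt, if_neg (by simp [Int.odd_iff, h])]

/-- The predicate cutting out `D_n` inside `ℤ²`. -/
def Pr (n : ℤ) (x : ℤ × ℤ) : Prop :=
  0 ≤ x.2 ∧ 3 * x.2 ≤ 4 * x.1 ∧
    (2 * x.1 - x.2 ≤ n ∨ (2 * x.1 - x.2 = n + 1 ∧ x.1 ≤ n))

/-- Backward direction: points of `P_n + σ_Z` do not satisfy the tail of `Pr`. -/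
lemma not_tail_of_mem (n : ℤ) (hn : 1 ≤ n) (x : ℤ × ℤ) (hx : x ∈ Pset n + sigmaZ) :
    ¬(2 * x.1 - x.2 ≤ n ∨ (2 * x.1 - x.2 = n + 1 ∧ x.1 ≤ n)) := by
  rw [Set.mem_add] at hx
  obtain ⟨p, hp, s, hs, rfl⟩ := hx
  obtain ⟨hs1, hs2⟩ : (0:ℤ) ≤ s.2 ∧ 3 * s.2 ≤ 4 * s.1 := hs
  intro hcon
  rw [Prod.fst_add, Prod.snd_add] at hcon
  rcases hp with ((hp | hp) | ⟨i, hi0, hi1, rfl⟩) | ⟨j, hj0, hj1, rfl⟩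
  · -- p = pPt n
    rcases Int.emod_two_eq_zero_or_one n with h2 | h2
    · rw [hp, pPt_even h2] at hcon
      simp only at hcon
      omega
    · rw [hp, pPt_odd h2] at hcon
      simp only at hcon
      omega
  · -- p = sPt n
    rcases Int.emod_two_eq_zero_or_one n with h2 | h2
    · rw [hp, sPt_even h2] at hcon
      simp only at hcon
      omega
    · rw [hp, sPt_odd h2] at hcon
      simp only at hcon
      omega
  · -- p = qPt n i
    simp only [qPt] at hcon
    omega
  · -- p = rPt n j
    simp only [rPt] at hcon
    -- 2 p.1 - p.2 = n + 1; equality case forces s = 0 and p.1 ≥ n + 1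
    omega

/-- Forward direction (contrapositive): a point of `σ_Z` failing the tail of `Pr`
lies in `P_n + σ_Z`. -/
lemma mem_of_not_tail (n : ℤ) (hn : 1 ≤ n) (x : ℤ × ℤ) (hb : 0 ≤ x.2)
    (hσ : 3 * x.2 ≤ 4 * x.1)
    (hu : ¬(2 * x.1 - x.2 ≤ n ∨ (2 * x.1 - x.2 = n + 1 ∧ x.1 ≤ n))) :
    x ∈ Pset n + sigmaZ := by
  push_neg at hu
  obtain ⟨hu1, hu2⟩ := hu
  have h3 : x.2 % 2 = 0 ∨ x.2 % 2 = 1 := Int.emod_two_eq_zero_or_one x.2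
  rcases Int.emod_two_eq_zero_or_one n with h2 | h2
  · -- n even
    have hodd : ¬ Odd n := by simp [Int.odd_iff, h2]
    by_cases hs : 2 * n + 4 ≤ x.2 ∧ n + 2 ≤ 2 * x.1 - x.2
    · refine mem_PS (sPt_mem n) ?_ ?_ <;> rw [sPt_even h2] <;> omega
    by_cases hr2 : 2 * n + 2 ≤ x.2
    · refine mem_PS (rPt_mem (n := n) (j := n / 2)
        (by omega) (by rw [if_neg hodd] <;> omega)) ?_ ?_ <;> simp only [rPt] <;> omega
    by_cases hr : n + 1 ≤ x.2
    · refine mem_PS (rPt_mem (n := n) (j := (x.2 - n - 1) / 2)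
        (by omega) (by rw [if_neg hodd] <;> omega)) ?_ ?_ <;> simp only [rPt] <;> omega
    by_cases hq : 2 ≤ x.2
    · refine mem_PS (qPt_mem (n := n) (i := (n - x.2 + 1) / 2)
        (by omega) (by rw [if_neg hodd] <;> omega)) ?_ ?_ <;> simp only [qPt] <;> omega
    · refine mem_PS (pPt_mem n) ?_ ?_ <;> rw [pPt_even h2] <;> omega
  · -- n odd
    have hodd : Odd n := Int.odd_iff.mpr h2
    by_cases hs : 2 * n + 2 ≤ x.2
    · refine mem_PS (sPt_mem n) ?_ ?_ <;> rw [sPt_odd h2] <;> omega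
    by_cases hr : n + 1 ≤ x.2
    · refine mem_PS (rPt_mem (n := n) (j := (x.2 - n - 1) / 2)
        (by omega) (by rw [if_pos hodd] <;> omega)) ?_ ?_ <;> simp only [rPt] <;> omega
    by_cases hq : 1 ≤ x.2
    · refine mem_PS (qPt_mem (n := n) (i := (n - x.2 + 1) / 2)
        (by omega) (by rw [if_pos hodd] <;> omega)) ?_ ?_ <;> simp only [qPt] <;> omega
    · refine mem_PS (pPt_mem n) ?_ ?_ <;> rw [pPt_odd h2] <;> omega

lemma Dset_eq (n : ℤ) (hn : 1 ≤ n) : Dset n = {x : ℤ × ℤ | Pr n x} := by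
  ext x
  constructor
  · rintro ⟨⟨hx1, hx2⟩, hx3⟩
    refine ⟨hx1, hx2, ?_⟩
    by_contra h
    exact hx3 (mem_of_not_tail n hn x hx1 hx2 h)
  · rintro ⟨h1, h2, h3⟩
    exact ⟨⟨h1, h2⟩, fun hmem => not_tail_of_mem n hn x hmem h3⟩

/- ## Counting -/

noncomputable def row (u lo hi : ℤ) : Finset (ℤ × ℤ) := (Finset.Icc lo hi).image (fun a => (a, 2 * a - u))

lemma mem_row {u lo hi : ℤ} {x : ℤ × ℤ} :
    x ∈ row u lo hi ↔ lo ≤ x.1 ∧ x.1 ≤ hi ∧ x.2 = 2 * x.1 - u := by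
  simp only [row, Finset.mem_image, Finset.mem_Icc]
  constructor
  · rintro ⟨a, ⟨h1, h2⟩, rfl⟩; exact ⟨h1, h2, rfl⟩
  · rintro ⟨h1, h2, h3⟩; exact ⟨x.1, ⟨h1, h2⟩, by rw [← h3]⟩

lemma card_row {u lo hi : ℤ} : (row u lo hi).card = (hi + 1 - lo).toNat := by
  rw [row, Finset.card_image_of_injective _ (fun a b h => by simpa using congrArg Prod.fst h),
    Int.card_Icc]

noncomputable def core (n : ℤ) : Finset (ℤ × ℤ) :=
  (Finset.Icc 0 n).biUnion (fun u => row u ((u + 1) / 2) (3 * u / 2))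

lemma mem_core {n : ℤ} {x : ℤ × ℤ} :
    x ∈ core n ↔ 0 ≤ x.2 ∧ 3 * x.2 ≤ 4 * x.1 ∧ 2 * x.1 - x.2 ≤ n := by
  simp only [core, Finset.mem_biUnion, Finset.mem_Icc, mem_row]
  constructor
  · rintro ⟨u, ⟨h0, h1⟩, ⟨r1, r2, r3⟩⟩
    omega
  · rintro ⟨h1, h2, h3⟩
    exact ⟨2 * x.1 - x.2, ⟨by omega, by omega⟩, by omega, by omega, by omega⟩

lemma card_core (k : ℕ) :
    (core (k : ℤ)).card = (((k : ℤ) + 1) * ((k : ℤ) + 2) / 2 - ((k : ℤ) + 1) / 2).toNat := by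
  induction k with
  | zero =>
    rw [Nat.cast_zero, core, Finset.Icc_self, Finset.singleton_biUnion, card_row]
    norm_num
  | succ k ih =>
    have hc : ((k + 1 : ℕ) : ℤ) = (k : ℤ) + 1 := by push_cast; ring
    rw [hc]
    set n : ℤ := (k : ℤ) with hn'
    have hn : 0 ≤ n := Int.natCast_nonneg k
    have hstep : core (n + 1) = core n ∪ row (n + 1) ((n + 2) / 2) (3 * (n + 1) / 2) := by
      ext x
      simp only [Finset.mem_union, mem_core, mem_row]
      omega
    have hdisj : Disjoint (core n) (row (n + 1) ((n + 2) / 2) (3 * (n + 1) / 2)) := by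
      rw [Finset.disjoint_left]
      intro x hx hx'
      rw [mem_core] at hx
      rw [mem_row] at hx'
      omega
    rw [hstep, Finset.card_union_of_disjoint hdisj, ih, card_row]
    have e1 : Even ((n + 1) * (n + 2)) := by
      have h := Int.even_mul_succ_self (n + 1)
      rwa [show n + 1 + 1 = n + 2 by ring] at h
    rw [Int.even_iff] at e1
    have key : (n + 1 + 1) * (n + 1 + 2) = (n + 1) * (n + 2) + 2 * (n + 2) := by ring
    have key2 : (n + 1) * (n + 2) = (n + 1) * n + 2 * (n + 1) := by ring
    have pos : 0 ≤ (n + 1) * n := mul_nonneg (by omega) hn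
    rcases Int.emod_two_eq_zero_or_one n with h2 | h2 <;> omega

noncomputable def Tfin (n : ℤ) : Finset (ℤ × ℤ) := core n ∪ row (n + 1) ((n + 2) / 2) n

lemma coe_Tfin (n : ℤ) (hn : 1 ≤ n) : (Tfin n : Set (ℤ × ℤ)) = {x : ℤ × ℤ | Pr n x} := by
  ext x
  simp only [Tfin, Finset.coe_union, Set.mem_union, Finset.mem_coe, mem_core, mem_row,
    Set.mem_setOf_eq, Pr]
  omega

lemma card_Tfin (k : ℕ) (hk : 1 ≤ k) :
    (Tfin (k : ℤ)).card = (((k : ℤ) + 1) * ((k : ℤ) + 2) / 2).toNat := by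
  have hn : (1 : ℤ) ≤ (k : ℤ) := by exact_mod_cast hk
  have hdisj : Disjoint (core (k : ℤ)) (row ((k : ℤ) + 1) (((k : ℤ) + 2) / 2) (k : ℤ)) := by
    rw [Finset.disjoint_left]
    intro x hx hx'
    rw [mem_core] at hx
    rw [mem_row] at hx'
    omega
  rw [Tfin, Finset.card_union_of_disjoint hdisj, card_core k, card_row]
  have e1 : Even (((k : ℤ) + 1) * ((k : ℤ) + 2)) := by
    have h := Int.even_mul_succ_self ((k : ℤ) + 1)
    rwa [show (k : ℤ) + 1 + 1 = (k : ℤ) + 2 by ring] at h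
  rw [Int.even_iff] at e1
  have key2 : ((k : ℤ) + 1) * ((k : ℤ) + 2) = ((k : ℤ) + 1) * (k : ℤ) + 2 * ((k : ℤ) + 1) := by
    ring
  have pos : 0 ≤ ((k : ℤ) + 1) * (k : ℤ) := mul_nonneg (by omega) (by omega)
  rcases Int.emod_two_eq_zero_or_one (k : ℤ) with h2 | h2 <;> omega

/-- for every integer `n ≥ 1`, the set `D_n` has exactly
`(n+1)(n+2)/2` elements. -/
theorem Dset_ncard (n : ℕ) (hn : 1 ≤ n) : (Dset (n : ℤ)).ncard = (n + 1) * (n + 2) / 2 := by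
  have h1 : (1 : ℤ) ≤ (n : ℤ) := by exact_mod_cast hn
  rw [Dset_eq (n : ℤ) h1, ← coe_Tfin (n : ℤ) h1, Set.ncard_coe_finset, card_Tfin n hn]
  have hm : ((n : ℤ) + 1) * ((n : ℤ) + 2) = ((n + 1) * (n + 2) : ℕ) := by push_cast; ring
  omega
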